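/- arXiv:math/0611097 — 2 statements merged into one kernel-verified Lean document; each statement's English description precedes it below -/
import Mathlib

section
/- If u is a bijective ternary homomorphism (ternary automorphism) of a full Hilbert B-module E, then the unique *-homomorphism φ : B → B with ⟨ux, uy⟩ = φ(⟨x, y⟩) is a *-automorphism of B. -/
open scoped RightActions

/-- The December-2024 Mathlib `CStarModule` (right `Aᵐᵒᵖ`-action, inner product
`A`-linear on the right in the second variable), restated verbatim since Mathlib's
`CStarModule` now uses a left `A`-action with a different convention. -/
class CStarModuleRight (A E : Type*) [NonUnitalSemiring A] [StarRing A] [Module ℂ A]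
    [AddCommGroup E] [Module ℂ E] [PartialOrder A] [SMul Aᵐᵒᵖ E] [Norm A] [Norm E]
    extends Inner A E where
  inner_add_right {x y z : E} : Inner.inner A x (y + z) = Inner.inner A x y + Inner.inner A x z
  inner_self_nonneg {x : E} : 0 ≤ Inner.inner A x x
  inner_self {x : E} : Inner.inner A x x = 0 ↔ x = 0
  inner_op_smul_right {a : A} {x y : E} : Inner.inner A x (y <• a) = Inner.inner A x y * a
  inner_smul_right_complex {z : ℂ} {x y : E} : Inner.inner A x (z • y) = z • Inner.inner A x y
  star_inner (x y : E) : star (Inner.inner A x y) = Inner.inner A y x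
  norm_eq_sqrt_norm_inner_self (x : E) : ‖x‖ = √‖Inner.inner A x x‖

theorem CStarModuleRight.inner_zero_right' {A E : Type*} [NonUnitalRing A] [StarRing A]
    [Module ℂ A] [AddCommGroup E] [Module ℂ E] [PartialOrder A] [SMul Aᵐᵒᵖ E] [Norm A] [Norm E]
    [CStarModuleRight A E] {x : E} : Inner.inner A x (0 : E) = 0 := by
  have h := CStarModuleRight.inner_add_right (A := A) (x := x) (y := (0 : E)) (z := 0)
  rw [add_zero] at h
  exact (left_eq_add.mp h)

theorem CStarModuleRight.inner_zero_left' {A E : Type*} [NonUnitalRing A] [StarRing A]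
    [Module ℂ A] [AddCommGroup E] [Module ℂ E] [PartialOrder A] [SMul Aᵐᵒᵖ E] [Norm A] [Norm E]
    [CStarModuleRight A E] {x : E} : Inner.inner A (0 : E) x = 0 := by
  rw [← CStarModuleRight.star_inner, CStarModuleRight.inner_zero_right', star_zero]

theorem CStarModuleRight.inner_op_smul_left' {A E : Type*} [NonUnitalSemiring A] [StarRing A]
    [Module ℂ A] [AddCommGroup E] [Module ℂ E] [PartialOrder A] [SMul Aᵐᵒᵖ E] [Norm A] [Norm E]
    [CStarModuleRight A E] {a : A} {x y : E} :
    Inner.inner A (x <• a) y = star a * Inner.inner A x y := by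
  rw [← CStarModuleRight.star_inner, CStarModuleRight.inner_op_smul_right, star_mul,
    CStarModuleRight.star_inner]

theorem stmt6 {B E : Type*}
    [NonUnitalCStarAlgebra B] [PartialOrder B] [StarOrderedRing B]
    [NormedAddCommGroup E] [NormedSpace ℂ E] [SMul Bᵐᵒᵖ E] [CStarModuleRight B E]
    [CompleteSpace E]
    (hfull : (Submodule.span ℂ {b : B | ∃ x y : E, inner B x y = b}).topologicalClosure = ⊤)
    (u : E → E) (hbij : Function.Bijective u)
    (htern : ∀ x y z : E, u (x <• inner B y z) = (u x) <• inner B (u y) (u z))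
    (φ : B →⋆ₙₐ[ℂ] B)
    (hφ : ∀ x y : E, inner B (u x) (u y) = φ (inner B x y)) :
    Function.Bijective φ := by
  -- u 0 = 0
  have hu0 : u 0 = 0 := by
    have : inner B (u 0) (u 0) = 0 := by
      rw [hφ 0 0, CStarModuleRight.inner_zero_left', map_zero]
    exact CStarModuleRight.inner_self.mp this
  -- injectivity
  have hinj : Function.Injective φ := by
    rw [injective_iff_map_eq_zero]
    intro b hb
    -- x <• b = 0 for all x
    have hsmul : ∀ x : E, x <• b = 0 := by
      intro x
      have h1 : inner B (u (x <• b)) (u (x <• b)) = 0 := by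
        rw [hφ]
        rw [CStarModuleRight.inner_op_smul_right, CStarModuleRight.inner_op_smul_left']
        rw [map_mul, hb, mul_zero]
      have := CStarModuleRight.inner_self.mp h1
      apply hbij.injective
      rw [this, hu0]
    -- hence ⟪x, y⟫ * b = 0 for all x y
    have hmul : ∀ c ∈ Submodule.span ℂ {b : B | ∃ x y : E, inner B x y = b},
        c * b = 0 := by
      intro c hc
      have hker : Submodule.span ℂ {b : B | ∃ x y : E, inner B x y = b} ≤
          LinearMap.ker (((ContinuousLinearMap.mul ℂ B).flip b : B →L[ℂ] B) : B →ₗ[ℂ] B) := by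
        rw [Submodule.span_le]
        rintro c ⟨x, y, rfl⟩
        simp only [SetLike.mem_coe, LinearMap.mem_ker, ContinuousLinearMap.coe_coe,
          ContinuousLinearMap.flip_apply, ContinuousLinearMap.mul_apply']
        rw [← CStarModuleRight.inner_op_smul_right, hsmul, CStarModuleRight.inner_zero_right']
      exact hker hc
    have hall : ∀ c : B, c * b = 0 := by
      intro c
      have hker : (Submodule.span ℂ
          {b : B | ∃ x y : E, inner B x y = b}).topologicalClosure ≤
          LinearMap.ker (((ContinuousLinearMap.mul ℂ B).flip b : B →L[ℂ] B) : B →ₗ[ℂ] B) := by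
        apply Submodule.topologicalClosure_minimal
        · intro c hc
          exact hmul c hc
        · exact ContinuousLinearMap.isClosed_ker ((ContinuousLinearMap.mul ℂ B).flip b)
      have := hker (hfull ▸ Submodule.mem_top (x := c))
      simpa using this
    have := hall (star b)
    exact (CStarRing.star_mul_self_eq_zero_iff b).mp this
  refine ⟨hinj, ?_⟩
  -- surjectivity
  have hiso : Isometry φ := NonUnitalStarAlgHom.isometry φ hinj
  have hclosed : IsClosed (Set.range φ) := hiso.isClosedEmbedding.isClosed_range
  have hrange : (Submodule.span ℂ {b : B | ∃ x y : E, inner B x y = b}).topologicalClosure ≤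
      LinearMap.range (φ : B →ₗ[ℂ] B) := by
    apply Submodule.topologicalClosure_minimal
    · rw [Submodule.span_le]
      rintro c ⟨x, y, rfl⟩
      obtain ⟨a, ha⟩ := hbij.surjective x
      obtain ⟨d, hd⟩ := hbij.surjective y
      exact ⟨inner B a d, by show φ (inner B a d) = _; rw [← hφ, ha, hd]⟩
    · exact hclosed
  intro c
  have := hrange (hfull ▸ Submodule.mem_top (x := c))
  exact this
end

section
/- If d₁ and d₂ are derivations of B and δ is simultaneously a d₁-derivation and a d₂-derivation of a full Hilbert B-module E, then d₁ ⊆ d₂ (as unbounded operators) if and only if dom(d₁) ⊆ dom(d₂). -/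
open scoped RightActions

/-- The class `CStarModule` as it stood in Mathlib (December 2024): right Hilbert modules. -/
class OldCStarModule (A E : Type*) [NonUnitalSemiring A] [StarRing A] [Module ℂ A]
    [AddCommGroup E] [Module ℂ E] [PartialOrder A] [SMul Aᵐᵒᵖ E] [Norm A] [Norm E]
    extends Inner A E where
  inner_add_right {x} {y} {z} : inner x (y + z) = inner x y + inner x z
  inner_self_nonneg {x} : 0 ≤ inner x x
  inner_self {x} : inner x x = 0 ↔ x = 0
  inner_op_smul_right {a : A} {x y : E} : inner x (y <• a) = inner x y * a
  inner_smul_right_complex {z : ℂ} {x} {y} : inner x (z • y) = z • inner x y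
  star_inner x y : star (inner x y) = inner y x
  norm_eq_sqrt_norm_inner_self x : ‖x‖ = √‖inner x x‖

/-- If `δ` is simultaneously a `d₁`-derivation and a `d₂`-derivation of a full Hilbert
module, then `d₁ ⊆ d₂` if and only if `dom d₁ ⊆ dom d₂`. -/
theorem stmt19 {B E : Type*}
    [NonUnitalCStarAlgebra B] [PartialOrder B] [StarOrderedRing B]
    [NormedAddCommGroup E] [NormedSpace ℂ E] [SMul Bᵐᵒᵖ E] [OldCStarModule B E]
    [CompleteSpace E]
    (hfull : (Submodule.span ℂ {b : B | ∃ x y : E, (inner B x y : B) = b}).topologicalClosure = ⊤)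
    (D : Submodule ℂ E) (hdense : Dense (D : Set E)) (δ : D →ₗ[ℂ] E)
    (B₁ B₂ : NonUnitalSubalgebra ℂ B) (d₁ : B₁ →ₗ[ℂ] B) (d₂ : B₂ →ₗ[ℂ] B)
    (hleib₁ : ∀ (b b' : B₁) (h : (b : B) * (b' : B) ∈ B₁),
      d₁ ⟨(b : B) * (b' : B), h⟩ = d₁ b * (b' : B) + (b : B) * d₁ b')
    (hleib₂ : ∀ (b b' : B₂) (h : (b : B) * (b' : B) ∈ B₂),
      d₂ ⟨(b : B) * (b' : B), h⟩ = d₂ b * (b' : B) + (b : B) * d₂ b')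
    (hmod₁ : ∀ (x : D) (b : B₁), (x : E) <• (b : B) ∈ D)
    (hmod₂ : ∀ (x : D) (b : B₂), (x : E) <• (b : B) ∈ D)
    (hder₁ : ∀ (x : D) (b : B₁),
      δ ⟨(x : E) <• (b : B), hmod₁ x b⟩ = δ x <• (b : B) + (x : E) <• d₁ b)
    (hder₂ : ∀ (x : D) (b : B₂),
      δ ⟨(x : E) <• (b : B), hmod₂ x b⟩ = δ x <• (b : B) + (x : E) <• d₂ b) :
    ((B₁ : Set B) ⊆ (B₂ : Set B) ∧
      ∀ (b : B₁) (h : (b : B) ∈ B₂), d₂ ⟨(b : B), h⟩ = d₁ b) ↔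
    (B₁ : Set B) ⊆ (B₂ : Set B) := by
  constructor
  · exact fun h => h.1
  · intro hsub
    refine ⟨hsub, fun b h => ?_⟩
    -- key step 1: for x ∈ D, x <• d₁ b = x <• d₂ ⟨b, h⟩
    have key1 : ∀ x : D, (x : E) <• d₁ b = (x : E) <• d₂ ⟨(b : B), h⟩ := by
      intro x
      have h1 := hder₁ x b
      have h2 := hder₂ x ⟨(b : B), h⟩
      have heq : (⟨(x : E) <• (b : B), hmod₁ x b⟩ : D)
          = ⟨(x : E) <• ((⟨(b : B), h⟩ : B₂) : B), hmod₂ x ⟨(b : B), h⟩⟩ := rfl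
      rw [heq, h2] at h1
      exact (add_left_cancel h1).symm
    -- key step 2: for all y ∈ E, x ∈ E, ⟪y,x⟫ * d₁ b = ⟪y,x⟫ * d₂ ⟨b, h⟩
    have key2 : ∀ y x : E, (inner B y x : B) * d₁ b = (inner B y x : B) * d₂ ⟨(b : B), h⟩ := by
      intro y x
      letI inst : CStarModule Bᵐᵒᵖ E :=
        { inner := fun x y => MulOpposite.op (inner B x y)
          inner_add_right := fun {x y z} => by
            simp only [OldCStarModule.inner_add_right, MulOpposite.op_add]
          inner_self_nonneg := fun {x} => OldCStarModule.inner_self_nonneg (A := B) (x := x)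
          inner_self := fun {x} => by
            rw [MulOpposite.op_eq_zero_iff]; exact OldCStarModule.inner_self
          inner_op_smul_right := fun {a x y} => by
            have := OldCStarModule.inner_op_smul_right (A := B) (a := MulOpposite.unop a)
              (x := x) (y := y)
            simp only [MulOpposite.op_unop] at this
            rw [this, MulOpposite.op_mul, MulOpposite.op_unop]
          inner_smul_right_complex := fun {z x y} => by
            rw [OldCStarModule.inner_smul_right_complex, MulOpposite.op_smul]
          star_inner := fun x y => by
            rw [← MulOpposite.op_star, OldCStarModule.star_inner]
          norm_eq_sqrt_norm_inner_self := fun x => OldCStarModule.norm_eq_sqrt_norm_inner_self x }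
      have hclosed : IsClosed {a : E | (inner B y a : B) * d₁ b
          = (inner B y a : B) * d₂ ⟨(b : B), h⟩} := by
        apply isClosed_eq
        · exact ((MulOpposite.continuous_unop.comp
            (CStarModule.innerSL (A := Bᵐᵒᵖ) y).continuous).mul continuous_const)
        · exact ((MulOpposite.continuous_unop.comp
            (CStarModule.innerSL (A := Bᵐᵒᵖ) y).continuous).mul continuous_const)
      have hD : (D : Set E) ⊆ {a : E | (inner B y a : B) * d₁ b
          = (inner B y a : B) * d₂ ⟨(b : B), h⟩} := by
        intro a ha
        have := key1 ⟨a, ha⟩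
        simp only [Set.mem_setOf_eq]
        rw [← OldCStarModule.inner_op_smul_right, ← OldCStarModule.inner_op_smul_right]
        exact congrArg _ this
      have := hclosed.closure_subset_iff.mpr hD
      rw [hdense.closure_eq] at this
      exact this (Set.mem_univ x)
    -- key step 3: for all a : B, a * d₁ b = a * d₂ ⟨b, h⟩
    have key3 : ∀ a : B, a * d₁ b = a * d₂ ⟨(b : B), h⟩ := by
      intro a
      set c₁ := d₁ b
      set c₂ := d₂ ⟨(b : B), h⟩
      let f : B →L[ℂ] B := (ContinuousLinearMap.mul ℂ B).flip c₁ - (ContinuousLinearMap.mul ℂ B).flip c₂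
      have hker : (Submodule.span ℂ {b : B | ∃ x y : E, (inner B x y : B) = b}) ≤
          LinearMap.ker (f : B →ₗ[ℂ] B) := by
        rw [Submodule.span_le]
        rintro a ⟨x, y, rfl⟩
        simp only [SetLike.mem_coe, LinearMap.mem_ker, ContinuousLinearMap.coe_coe,
          ContinuousLinearMap.sub_apply, ContinuousLinearMap.flip_apply,
          ContinuousLinearMap.mul_apply', f]
        rw [key2 x y]
        exact sub_self _
      have hker' : (Submodule.span ℂ
          {b : B | ∃ x y : E, (inner B x y : B) = b}).topologicalClosure ≤
          LinearMap.ker (f : B →ₗ[ℂ] B) := by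
        apply Submodule.topologicalClosure_minimal _ hker
        exact ContinuousLinearMap.isClosed_ker f
      rw [hfull] at hker'
      have := hker' (Submodule.mem_top (x := a))
      simpa [f, sub_eq_zero] using this
    -- conclude: c := d₁ b - d₂ ⟨b, h⟩ satisfies star c * c = 0
    set c := d₁ b - d₂ ⟨(b : B), h⟩ with hc
    have : star c * c = 0 := by
      have h1 := key3 (star c)
      rw [hc]
      rw [mul_sub, h1, sub_self]
    have hc0 : c = 0 := by
      have := CStarRing.star_mul_self_eq_zero_iff c
      exact this.mp ‹_›
    rw [hc] at hc0
    exact (sub_eq_zero.mp hc0).symm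
end
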